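/- For all positive integers n, k, p with k ≤ n, Σ_{j=k}^{n} s(n,j)·S(j,k)·C(j,p) = n!·Σ_{i=1}^{n-k+1} C(n-i,k-1)·Σ_{m=1}^{min(k,p)} (S(p,m)/(k-m)!)·(s(i+m-1,p)/(i+m-1)!). -/

import Mathlib

/-- Unsigned Stirling numbers of the first kind. -/
def stirling1 : ℕ → ℕ → ℕ
  | 0, 0 => 1
  | 0, _ + 1 => 0
  | _ + 1, 0 => 0
  | n + 1, k + 1 => stirling1 n k + n * stirling1 n (k + 1)

/-- Stirling numbers of the second kind. -/
def stirling2 : ℕ → ℕ → ℕ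
  | 0, 0 => 1
  | 0, _ + 1 => 0
  | _ + 1, 0 => 0
  | n + 1, k + 1 => stirling2 n k + (k + 1) * stirling2 n (k + 1)



/-- number of ways to extend: t new elements, b current blocks, end with k blocks -/
def Bgrow : ℕ → ℕ → ℕ → ℕ
  | 0, b, k => if b = k then 1 else 0
  | t + 1, b, k => b * Bgrow t b k + Bgrow t (b + 1) k

lemma stirling1_eq_zero : ∀ {q p : ℕ}, q < p → stirling1 q p = 0
  | 0, p + 1, _ => rfl
  | q + 1, p + 1, h => by
    have h1 : q < p := Nat.lt_of_succ_lt_succ h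
    have h2 : q < p + 1 := Nat.lt_of_succ_lt h
    simp [stirling1, stirling1_eq_zero h1, stirling1_eq_zero h2]

lemma stirling2_eq_zero : ∀ {q p : ℕ}, q < p → stirling2 q p = 0
  | 0, p + 1, _ => rfl
  | q + 1, p + 1, h => by
    have h1 : q < p := Nat.lt_of_succ_lt_succ h
    have h2 : q < p + 1 := Nat.lt_of_succ_lt h
    simp [stirling2, stirling2_eq_zero h1, stirling2_eq_zero h2]

lemma Bgrow_eq_zero : ∀ (t : ℕ) {b k : ℕ}, k < b → Bgrow t b k = 0
  | 0, b, k, h => by simp [Bgrow, Nat.ne_of_gt h]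
  | t + 1, b, k, h => by
    simp [Bgrow, Bgrow_eq_zero t h, Bgrow_eq_zero t (Nat.lt_succ_of_lt h)]

lemma stirling1_succ_zero (n : ℕ) : stirling1 (n+1) 0 = 0 := rfl
lemma stirling2_succ_succ (n k : ℕ) :
    stirling2 (n+1) (k+1) = stirling2 n k + (k + 1) * stirling2 n (k + 1) := rfl
lemma stirling1_succ_succ (n k : ℕ) :
    stirling1 (n+1) (k+1) = stirling1 n k + n * stirling1 n (k + 1) := rfl

/-- Lemma A -/
lemma lemA : ∀ (u p k : ℕ), stirling2 (p + u) k
    = ∑ m ∈ Finset.range (p + 1), stirling2 p m * Bgrow u m k := by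
  intro u
  induction u with
  | zero =>
    intro p k
    simp only [Nat.add_zero, Bgrow, mul_ite, mul_one, mul_zero]
    rw [Finset.sum_ite_eq' (Finset.range (p+1)) k (fun m => stirling2 p m)]
    by_cases h : k ∈ Finset.range (p+1)
    · simp [h]
    · have hk : p < k := by simpa [Finset.mem_range, Nat.lt_succ_iff, not_le] using h
      simp [h, stirling2_eq_zero hk]
  | succ u ih =>
    intro p k
    have h1 : p + (u + 1) = (p + 1) + u := by omega
    rw [h1, ih (p+1) k]
    -- RHS of ih : ∑ m ∈ range (p+2), stirling2 (p+1) m * Bgrow u m k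
    rw [Finset.sum_range_succ']
    -- = ∑ m ∈ range (p+1), stirling2 (p+1) (m+1) * Bgrow u (m+1) k + stirling2 (p+1) 0 * Bgrow u 0 k
    have h0 : stirling2 (p+1) 0 = 0 := rfl
    rw [h0]
    simp only [zero_mul, add_zero]
    have step : ∀ m ∈ Finset.range (p+1),
        stirling2 (p+1) (m+1) * Bgrow u (m+1) k
          = stirling2 p m * Bgrow u (m+1) k + (m+1) * (stirling2 p (m+1) * Bgrow u (m+1) k) := by
      intro m _
      rw [stirling2_succ_succ]; ring
    rw [Finset.sum_congr rfl step, Finset.sum_add_distrib]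
    have h2 : ∑ m ∈ Finset.range (p+1), (m+1) * (stirling2 p (m+1) * Bgrow u (m+1) k)
        = ∑ m ∈ Finset.range (p+1), m * (stirling2 p m * Bgrow u m k) := by
      rw [Finset.sum_range_succ' (fun m => m * (stirling2 p m * Bgrow u m k)) p]
      have : stirling2 p (p+1) = 0 := stirling2_eq_zero (Nat.lt_succ_self p)
      simp [Finset.sum_range_succ, this]
    rw [h2]
    have goalstep : ∀ m ∈ Finset.range (p+1),
        stirling2 p m * Bgrow (u+1) m k
          = m * (stirling2 p m * Bgrow u m k) + stirling2 p m * Bgrow u (m+1) k := by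
      intro m _
      show stirling2 p m * (m * Bgrow u m k + Bgrow u (m+1) k) = _
      ring
    rw [Finset.sum_congr rfl goalstep, Finset.sum_add_distrib, add_comm]

lemma key (a k' : ℕ) :
    ((a : ℚ) + 1 - k') * ((a+1).choose k' : ℚ) = ((a : ℚ) + 1) * (a.choose k' : ℚ) := by
  have hnat : (a+1) * a.choose k' = (a+1).choose k' * (a + 1 - k') := by
    have e1 := Nat.add_one_mul_choose_eq a k'
    have e2 := Nat.choose_succ_right_eq (a+1) k'
    rw [e1, e2]
  rcases le_or_gt k' (a+1) with h | h
  · have hc : ((a:ℚ) + 1 - k') = ((a + 1 - k' : ℕ) : ℚ) := by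
      rw [Nat.cast_sub h]; push_cast; ring
    rw [hc]
    exact_mod_cast (Nat.mul_comm (a+1-k') ((a+1).choose k')).trans hnat.symm
  · rw [Nat.choose_eq_zero_of_lt h, Nat.choose_eq_zero_of_lt (by omega : a < k')]
    simp

noncomputable def RBq (n k m p : ℕ) : ℚ :=
  ∑ q ∈ Finset.range (n+1),
    ((n - q + m - 1).choose (k-1) : ℚ) * ((n.factorial : ℚ) / (q.factorial : ℚ)) *
      (stirling1 q p : ℚ)

noncomputable def Wq (n k m p : ℕ) : ℚ :=
  ∑ q ∈ Finset.range (n+1),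
    (q : ℚ) * ((n - q + m - 1).choose (k-1) : ℚ) * ((n.factorial : ℚ) / (q.factorial : ℚ)) *
      (stirling1 q p : ℚ)

lemma lemA1 (n k m p : ℕ) (hm : 1 ≤ m) :
    RBq (n+1) k m p = ((n:ℚ)+1) * RBq n k (m+1) p
      + ((m-1).choose (k-1) : ℚ) * (stirling1 (n+1) p : ℚ) := by
  rw [RBq, Finset.sum_range_succ]
  congr 1
  · rw [RBq, Finset.mul_sum]
    apply Finset.sum_congr rfl
    intro q hq
    have hq' : q ≤ n := Finset.mem_range_succ_iff.mp hq
    have h1 : n + 1 - q + m - 1 = n - q + (m+1) - 1 := by omega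
    have h2 : ((n+1).factorial : ℚ) / q.factorial = ((n:ℚ)+1) * ((n.factorial:ℚ)/q.factorial) := by
      rw [Nat.factorial_succ]; push_cast; ring
    rw [h1, h2]; ring
  · have h3 : n + 1 - (n+1) + m - 1 = m - 1 := by omega
    have h4 : ((n+1).factorial : ℚ) / ((n+1).factorial : ℚ) = 1 := by
      apply div_self
      exact_mod_cast Nat.factorial_ne_zero (n+1)
    rw [h3, h4, mul_one]

lemma lemP1 (n k m p : ℕ) (hm : 1 ≤ m) (hk : 1 ≤ k) :
    ((n:ℚ) + m + 1 - k) * RBq n k (m+1) p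
      = Wq n k (m+1) p + ((n:ℚ)+m) * RBq n k m p - Wq n k m p := by
  rw [RBq, RBq, Wq, Wq, Finset.mul_sum, Finset.mul_sum, ← Finset.sum_add_distrib,
    ← Finset.sum_sub_distrib]
  apply Finset.sum_congr rfl
  intro q hq
  have hq' : q ≤ n := Finset.mem_range_succ_iff.mp hq
  have ha1 : n - q + (m+1) - 1 = (n - q + m - 1) + 1 := by omega
  have hkey := key (n - q + m - 1) (k-1)
  have hc1 : ((n - q + m - 1 : ℕ) : ℚ) = (n:ℚ) - q + m - 1 := by
    have e1 : n - q + m - 1 = (n - q) + (m - 1) := by omega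
    rw [e1]
    push_cast [Nat.cast_sub hq', Nat.cast_sub hm]
    ring
  have hc2 : ((k - 1 : ℕ) : ℚ) = (k:ℚ) - 1 := by
    push_cast [Nat.cast_sub hk]; ring
  rw [hc1, hc2] at hkey
  rw [ha1]
  set C1 : ℚ := ((n - q + m - 1 + 1).choose (k - 1) : ℚ) with hC1
  set C0 : ℚ := ((n - q + m - 1).choose (k - 1) : ℚ) with hC0
  -- hkey : ((n:ℚ)-q+m-1+1-((k:ℚ)-1)) * C1 = ((n:ℚ)-q+m-1+1) * C0
  set F : ℚ := (n.factorial : ℚ) / (q.factorial : ℚ)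
  set s : ℚ := (stirling1 q p : ℚ)
  linear_combination F * s * hkey

lemma lemP3 (n k m p : ℕ) (hm : 1 ≤ m) :
    (∑ q ∈ Finset.range (n+1),
      ((n - q + m - 1).choose (k-1) : ℚ) * ((n.factorial : ℚ) / (q.factorial : ℚ)) *
        (stirling1 (q+1) p : ℚ))
    = Wq n k (m+1) p + ((m-1).choose (k-1) : ℚ) * (stirling1 (n+1) p : ℚ) := by
  have hJ := Finset.sum_range_succ'
    (fun r => (r : ℚ) * (((n+1) - r + m - 1).choose (k-1) : ℚ) *
      ((n.factorial : ℚ) / (r.factorial : ℚ)) * (stirling1 r p : ℚ)) (n+1)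
  have hJ2 := Finset.sum_range_succ
    (fun r => (r : ℚ) * (((n+1) - r + m - 1).choose (k-1) : ℚ) *
      ((n.factorial : ℚ) / (r.factorial : ℚ)) * (stirling1 r p : ℚ)) (n+1)
  simp only [Nat.cast_zero, zero_mul, add_zero] at hJ
  -- hJ : Σ_{range(n+2)} J = Σ_{q∈range(n+1)} J(q+1)
  have e1 : (∑ q ∈ Finset.range (n+1),
      ((q:ℚ)+1) * (((n+1) - (q+1) + m - 1).choose (k-1) : ℚ) *
        ((n.factorial : ℚ) / ((q+1).factorial : ℚ)) * (stirling1 (q+1) p : ℚ))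
      = ∑ q ∈ Finset.range (n+1),
      ((n - q + m - 1).choose (k-1) : ℚ) * ((n.factorial : ℚ) / (q.factorial : ℚ)) *
        (stirling1 (q+1) p : ℚ) := by
    apply Finset.sum_congr rfl
    intro q hq
    have hq' : q ≤ n := Finset.mem_range_succ_iff.mp hq
    have h1 : (n+1) - (q+1) + m - 1 = n - q + m - 1 := by omega
    have h2 : ((q:ℚ)+1) * ((n.factorial : ℚ) / ((q+1).factorial : ℚ))
        = (n.factorial : ℚ) / (q.factorial : ℚ) := by
      rw [Nat.factorial_succ]
      push_cast
      have hq0 : (q.factorial : ℚ) ≠ 0 := by positivity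
      field_simp
    rw [h1, ← h2]; ring
  have e2 : ∀ r ∈ Finset.range (n+1),
      (r : ℚ) * (((n+1) - r + m - 1).choose (k-1) : ℚ) *
        ((n.factorial : ℚ) / (r.factorial : ℚ)) * (stirling1 r p : ℚ)
      = (r : ℚ) * ((n - r + (m+1) - 1).choose (k-1) : ℚ) *
        ((n.factorial : ℚ) / (r.factorial : ℚ)) * (stirling1 r p : ℚ) := by
    intro r hr
    have hr' : r ≤ n := Finset.mem_range_succ_iff.mp hr
    have : (n+1) - r + m - 1 = n - r + (m+1) - 1 := by omega
    rw [this]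
  have e3 : ((n:ℚ)+1) * (((n+1) - (n+1) + m - 1).choose (k-1) : ℚ) *
        ((n.factorial : ℚ) / ((n+1).factorial : ℚ)) * (stirling1 (n+1) p : ℚ)
      = ((m-1).choose (k-1) : ℚ) * (stirling1 (n+1) p : ℚ) := by
    have h1 : (n+1) - (n+1) + m - 1 = m - 1 := by omega
    have h2 : ((n:ℚ)+1) * ((n.factorial : ℚ) / ((n+1).factorial : ℚ)) = 1 := by
      rw [Nat.factorial_succ]
      push_cast
      have hn0 : (n.factorial : ℚ) ≠ 0 := by positivity
      field_simp
    rw [h1]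
    calc ((n:ℚ)+1) * ((m - 1).choose (k-1) : ℚ) *
        ((n.factorial : ℚ) / ((n+1).factorial : ℚ)) * (stirling1 (n+1) p : ℚ)
        = (((n:ℚ)+1) * ((n.factorial : ℚ) / ((n+1).factorial : ℚ))) *
            (((m-1).choose (k-1) : ℚ) * (stirling1 (n+1) p : ℚ)) := by ring
      _ = ((m-1).choose (k-1) : ℚ) * (stirling1 (n+1) p : ℚ) := by rw [h2, one_mul]
  push_cast at hJ hJ2
  push_cast at e1 e3
  rw [← e1, ← hJ, hJ2, Finset.sum_congr rfl e2, e3, Wq]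

lemma stirling1_cast_succ (q p : ℕ) :
    (stirling1 (q+1) (p+1) : ℚ) = (stirling1 q p : ℚ) + (q:ℚ) * (stirling1 q (p+1) : ℚ) := by
  show ((stirling1 q p + q * stirling1 q (p+1) : ℕ) : ℚ) = _
  push_cast; ring

lemma lemP4 (n k m p : ℕ) (hm : 1 ≤ m) :
    RBq n k m p = Wq n k (m+1) (p+1)
      + ((m-1).choose (k-1) : ℚ) * (stirling1 (n+1) (p+1) : ℚ) - Wq n k m (p+1) := by
  have h := lemP3 n k m (p+1) hm
  rw [← h, RBq, Wq, ← Finset.sum_sub_distrib]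
  apply Finset.sum_congr rfl
  intro q hq
  rw [stirling1_cast_succ]
  ring

lemma lemRBrec (n k m p : ℕ) (hm : 1 ≤ m) (hk : 1 ≤ k) :
    RBq (n+1) k m (p+1) = ((n:ℚ)+m) * RBq n k m (p+1)
      + ((k:ℚ)-m) * RBq n k (m+1) (p+1) + RBq n k m p := by
  have h1 := lemA1 n k m (p+1) hm
  have h2 := lemP1 n k m (p+1) hm hk
  have h3 := lemP4 n k m p hm
  linear_combination h1 + h2 - h3

lemma Wq_zero (n k m : ℕ) : Wq n k m 0 = 0 := by
  rw [Wq]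
  apply Finset.sum_eq_zero
  intro q hq
  rcases q with _ | q'
  · simp
  · have : stirling1 (q'+1) 0 = 0 := rfl
    rw [this]; simp

lemma lemRBrec0 (n k m : ℕ) (hm : 1 ≤ m) (hk : 1 ≤ k) :
    RBq (n+1) k m 0 = ((n:ℚ)+m) * RBq n k m 0 + ((k:ℚ)-m) * RBq n k (m+1) 0 := by
  have h1 := lemA1 n k m 0 hm
  have h2 := lemP1 n k m 0 hm hk
  have hW1 := Wq_zero n k m
  have hW2 := Wq_zero n k (m+1)
  have hs : (stirling1 (n+1) 0 : ℚ) = 0 := by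
    show ((0:ℕ):ℚ) = 0; simp
  rw [hs, mul_zero, add_zero] at h1
  linear_combination h1 + h2 + hW2 - hW1

noncomputable def LBq (n k m p : ℕ) : ℚ :=
  ∑ j ∈ Finset.range (n+1),
    (stirling1 n j : ℚ) * ((j.choose p : ℚ) * (Bgrow (j - p) m k : ℚ))

lemma lemLBaux (n k m p : ℕ) :
    LBq (n+1) k m p = (n:ℚ) * LBq n k m p
      + ∑ j ∈ Finset.range (n+1),
          (stirling1 n j : ℚ) * (((j+1).choose p : ℚ) * (Bgrow (j+1-p) m k : ℚ)) := by
  rw [LBq, Finset.sum_range_succ']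
  have h0 : (stirling1 (n+1) 0 : ℚ) = 0 := by norm_cast
  rw [h0, zero_mul, add_zero]
  have hsplit : ∀ j ∈ Finset.range (n+1),
      (stirling1 (n+1) (j+1) : ℚ) * (((j+1).choose p : ℚ) * (Bgrow (j+1-p) m k : ℚ))
      = (stirling1 n j : ℚ) * (((j+1).choose p : ℚ) * (Bgrow (j+1-p) m k : ℚ))
        + (n:ℚ) * ((stirling1 n (j+1) : ℚ) * (((j+1).choose p : ℚ) * (Bgrow (j+1-p) m k : ℚ))) := by
    intro j _
    have : (stirling1 (n+1) (j+1) : ℚ) = (stirling1 n j : ℚ) + (n:ℚ) * (stirling1 n (j+1) : ℚ) := by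
      show ((stirling1 n j + n * stirling1 n (j+1) : ℕ) : ℚ) = _
      push_cast; ring
    rw [this]; ring
  rw [Finset.sum_congr rfl hsplit, Finset.sum_add_distrib, ← Finset.mul_sum]
  have hshift : (n:ℚ) * ∑ j ∈ Finset.range (n+1),
      (stirling1 n (j+1) : ℚ) * (((j+1).choose p : ℚ) * (Bgrow (j+1-p) m k : ℚ))
      = (n:ℚ) * LBq n k m p := by
    have h1 := Finset.sum_range_succ'
      (fun j => (stirling1 n j : ℚ) * ((j.choose p : ℚ) * (Bgrow (j-p) m k : ℚ))) (n+1)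
    have h2 := Finset.sum_range_succ
      (fun j => (stirling1 n j : ℚ) * ((j.choose p : ℚ) * (Bgrow (j-p) m k : ℚ))) (n+1)
    have h3 : (stirling1 n (n+1) : ℚ) = 0 := by
      rw [stirling1_eq_zero (Nat.lt_succ_self n)]; simp
    rw [h3, zero_mul, add_zero] at h2
    have h5 : ∑ j ∈ Finset.range (n+1),
        (stirling1 n (j+1) : ℚ) * (((j+1).choose p : ℚ) * (Bgrow (j+1-p) m k : ℚ))
        = LBq n k m p
          - (stirling1 n 0 : ℚ) * ((Nat.choose 0 p : ℚ) * (Bgrow (0-p) m k : ℚ)) := by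
      rw [LBq, ← h2]
      linarith [h1]
    rw [h5]
    have h6 : (n:ℚ) * ((stirling1 n 0 : ℚ) * ((Nat.choose 0 p : ℚ) * (Bgrow (0-p) m k : ℚ))) = 0 := by
      rcases n with _ | n'
      · simp
      · have : stirling1 (n'+1) 0 = 0 := rfl
        rw [this]; simp
    ring_nf
    ring_nf at h6
    linarith [h6]
  linarith [hshift]

lemma lemLBrec (n k m p : ℕ) :
    LBq (n+1) k m (p+1) = ((n:ℚ)+m) * LBq n k m (p+1) + LBq n k (m+1) (p+1) + LBq n k m p := by
  rw [lemLBaux]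
  have hpt : ∀ j ∈ Finset.range (n+1),
      (stirling1 n j : ℚ) * (((j+1).choose (p+1) : ℚ) * (Bgrow (j+1-(p+1)) m k : ℚ))
      = (stirling1 n j : ℚ) * ((j.choose p : ℚ) * (Bgrow (j-p) m k : ℚ))
        + ((m:ℚ) * ((stirling1 n j : ℚ) * ((j.choose (p+1) : ℚ) * (Bgrow (j-(p+1)) m k : ℚ)))
           + (stirling1 n j : ℚ) * ((j.choose (p+1) : ℚ) * (Bgrow (j-(p+1)) (m+1) k : ℚ))) := by
    intro j _
    have hc : ((j+1).choose (p+1) : ℚ) = (j.choose p : ℚ) + (j.choose (p+1) : ℚ) := by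
      rw [Nat.choose_succ_succ]; push_cast; ring
    have hB : j + 1 - (p+1) = j - p := by omega
    rcases le_or_gt (p+1) j with hj | hj
    · have h2 : j - p = (j - (p+1)) + 1 := by omega
      have h3 : (Bgrow ((j-(p+1))+1) m k : ℚ)
          = (m:ℚ) * (Bgrow (j-(p+1)) m k : ℚ) + (Bgrow (j-(p+1)) (m+1) k : ℚ) := by
        show ((m * Bgrow (j-(p+1)) m k + Bgrow (j-(p+1)) (m+1) k : ℕ) : ℚ) = _
        push_cast; ring
      rw [hB, hc, h2, h3]; ring
    · have h4 : (j.choose (p+1) : ℚ) = 0 := by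
        rw [Nat.choose_eq_zero_of_lt hj]; simp
      rw [hB, hc, h4]; ring
  rw [Finset.sum_congr rfl hpt, Finset.sum_add_distrib, Finset.sum_add_distrib, ← Finset.mul_sum]
  rw [show LBq n k m (p+1) = ∑ j ∈ Finset.range (n+1),
      (stirling1 n j : ℚ) * ((j.choose (p+1) : ℚ) * (Bgrow (j-(p+1)) m k : ℚ)) from rfl,
    show LBq n k (m+1) (p+1) = ∑ j ∈ Finset.range (n+1),
      (stirling1 n j : ℚ) * ((j.choose (p+1) : ℚ) * (Bgrow (j-(p+1)) (m+1) k : ℚ)) from rfl,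
    show LBq n k m p = ∑ j ∈ Finset.range (n+1),
      (stirling1 n j : ℚ) * ((j.choose p : ℚ) * (Bgrow (j-p) m k : ℚ)) from rfl]
  ring

lemma lemLBrec0 (n k m : ℕ) :
    LBq (n+1) k m 0 = ((n:ℚ)+m) * LBq n k m 0 + LBq n k (m+1) 0 := by
  rw [lemLBaux]
  have hpt : ∀ j ∈ Finset.range (n+1),
      (stirling1 n j : ℚ) * (((j+1).choose 0 : ℚ) * (Bgrow (j+1-0) m k : ℚ))
      = (m:ℚ) * ((stirling1 n j : ℚ) * ((j.choose 0 : ℚ) * (Bgrow (j-0) m k : ℚ)))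
        + (stirling1 n j : ℚ) * ((j.choose 0 : ℚ) * (Bgrow (j-0) (m+1) k : ℚ)) := by
    intro j _
    have h3 : (Bgrow (j+1) m k : ℚ)
        = (m:ℚ) * (Bgrow j m k : ℚ) + (Bgrow j (m+1) k : ℚ) := by
      show ((m * Bgrow j m k + Bgrow j (m+1) k : ℕ) : ℚ) = _
      push_cast; ring
    simp only [Nat.choose_zero_right, Nat.sub_zero, Nat.cast_one, one_mul]
    rw [h3]; ring
  rw [Finset.sum_congr rfl hpt, Finset.sum_add_distrib, ← Finset.mul_sum]
  rw [show LBq n k m 0 = ∑ j ∈ Finset.range (n+1),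
      (stirling1 n j : ℚ) * ((j.choose 0 : ℚ) * (Bgrow (j-0) m k : ℚ)) from rfl,
    show LBq n k (m+1) 0 = ∑ j ∈ Finset.range (n+1),
      (stirling1 n j : ℚ) * ((j.choose 0 : ℚ) * (Bgrow (j-0) (m+1) k : ℚ)) from rfl]
  ring

lemma LBq_eq_zero (n k m p : ℕ) (h : k < m) : LBq n k m p = 0 := by
  rw [LBq]
  apply Finset.sum_eq_zero
  intro j _
  rw [Bgrow_eq_zero _ h]
  simp

lemma lemB (k : ℕ) (hk : 1 ≤ k) : ∀ n m p, 1 ≤ m → m ≤ k →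
    ((k-m).factorial : ℚ) * LBq n k m p = RBq n k m p := by
  intro n
  induction n with
  | zero =>
    intro m p hm hmk
    rw [LBq, RBq]
    simp only [zero_add, Finset.sum_range_one]
    rcases p with _ | p'
    · have hs : (stirling1 0 0 : ℚ) = 1 := by norm_cast
      have hB : Bgrow (0-0) m k = if m = k then 1 else 0 := rfl
      rcases eq_or_lt_of_le hmk with rfl | hlt
      · simp [hs, Bgrow, Nat.sub_self]
      · have h1 : (m-1).choose (k-1) = 0 := Nat.choose_eq_zero_of_lt (by omega)
        simp [hs, Bgrow, Nat.ne_of_lt hlt, h1]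
    · have h1 : (Nat.choose 0 (p'+1) : ℚ) = 0 := by simp
      have h2 : (stirling1 0 (p'+1) : ℚ) = 0 := by norm_cast
      rw [h1, h2]
      ring
  | succ n ih =>
    intro m p hm hmk
    have e2 : ∀ p', ((k-m).factorial : ℚ) * LBq n k (m+1) p' = ((k:ℚ)-m) * RBq n k (m+1) p' := by
      intro p'
      rcases eq_or_lt_of_le hmk with rfl | hlt
      · rw [LBq_eq_zero n m (m+1) p' (Nat.lt_succ_self m)]
        rw [show ((m:ℚ) - m) = 0 by ring]
        simp
      · have hfac : (k-m).factorial = (k-m) * (k-(m+1)).factorial := by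
          have h5 : k - m = (k - (m+1)) + 1 := by omega
          rw [h5, Nat.factorial_succ]
        have hih := ih (m+1) p' (by omega) hlt
        have hc : ((k-m : ℕ):ℚ) = (k:ℚ) - m := by
          rw [Nat.cast_sub (by omega)]
        calc ((k-m).factorial : ℚ) * LBq n k (m+1) p'
            = ((k-m : ℕ) : ℚ) * (((k-(m+1)).factorial : ℚ) * LBq n k (m+1) p') := by
              rw [hfac]; push_cast; ring
          _ = ((k:ℚ)-m) * RBq n k (m+1) p' := by rw [hih, hc]
    rcases p with _ | p'
    · rw [lemLBrec0, lemRBrec0 n k m hm hk]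
      have e1 := ih m 0 hm hmk
      have e2' := e2 0
      linear_combination ((n:ℚ)+m) * e1 + e2'
    · rw [lemLBrec, lemRBrec n k m p' hm hk]
      have e1 := ih m (p'+1) hm hmk
      have e1' := ih m p' hm hmk
      have e2' := e2 (p'+1)
      linear_combination ((n:ℚ)+m) * e1 + e2' + e1'

lemma lemL7 (j k p : ℕ) (hp : 1 ≤ p) :
    stirling2 j k * j.choose p
      = ∑ m ∈ Finset.Icc 1 (min k p), stirling2 p m * (j.choose p * Bgrow (j-p) m k) := by
  rcases lt_or_ge j p with hj | hj
  · rw [Nat.choose_eq_zero_of_lt hj]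
    simp
  · obtain ⟨u, rfl⟩ := Nat.exists_eq_add_of_le hj
    rw [lemA u p k]
    have hsub : Finset.Icc 1 (min k p) ⊆ Finset.range (p+1) := by
      intro x hx
      rw [Finset.mem_Icc] at hx
      rw [Finset.mem_range]
      omega
    rw [← Finset.sum_subset hsub]
    · rw [Finset.sum_mul]
      apply Finset.sum_congr rfl
      intro m _
      have : p + u - p = u := by omega
      rw [this]; ring
    · intro x hx hnx
      rw [Finset.mem_range] at hx
      rw [Finset.mem_Icc] at hnx
      rcases Nat.eq_zero_or_pos x with rfl | hx0
      · have : stirling2 p 0 = 0 := by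
          rcases p with _ | p'
          · omega
          · rfl
        rw [this]; ring
      · have hkx : k < x := by omega
        rw [Bgrow_eq_zero _ hkx]
        ring

lemma lemL8 (n k m p : ℕ) (hm : 1 ≤ m) (hmk : m ≤ k) (hkn : k ≤ n) (hmp : m ≤ p) :
    RBq n k m p = ∑ i ∈ Finset.Icc 1 (n-k+1),
      ((n-i).choose (k-1) : ℚ) * ((n.factorial : ℚ) / ((i+m-1).factorial : ℚ)) *
        (stirling1 (i+m-1) p : ℚ) := by
  rw [RBq]
  have hsub : Finset.Icc m (n-k+m) ⊆ Finset.range (n+1) := by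
    intro x hx
    rw [Finset.mem_Icc] at hx
    rw [Finset.mem_range]
    omega
  rw [← Finset.sum_subset hsub]
  · apply Finset.sum_bij (fun (q : ℕ) (_ : q ∈ Finset.Icc m (n-k+m)) => q - m + 1)
    · intro q hq
      rw [Finset.mem_Icc] at hq ⊢
      omega
    · intro q1 h1 q2 h2 he
      rw [Finset.mem_Icc] at h1 h2
      omega
    · intro i hi
      rw [Finset.mem_Icc] at hi
      exact ⟨i + m - 1, Finset.mem_Icc.mpr (by omega), by omega⟩
    · intro q hq
      rw [Finset.mem_Icc] at hq
      have e1 : n - (q - m + 1) = n - q + m - 1 := by omega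
      have e2 : q - m + 1 + m - 1 = q := by omega
      rw [e1, e2]
  · intro q hq hnq
    rw [Finset.mem_range] at hq
    rw [Finset.mem_Icc] at hnq
    rcases lt_or_ge q m with hqm | hqm
    · have : stirling1 q p = 0 := stirling1_eq_zero (by omega)
      rw [this]
      simp
    · have hgt : n - k + m < q := by omega
      have : n - q + m - 1 < k - 1 := by omega
      rw [Nat.choose_eq_zero_of_lt this]
      simp


open scoped BigOperators
theorem stmt_6 (n k p : ℕ) (hk : 1 ≤ k) (hkn : k ≤ n) (hp : 1 ≤ p) :
    (∑ j ∈ Finset.Icc k n, (stirling1 n j : ℚ) * (stirling2 j k : ℚ) * (j.choose p : ℚ)) =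
      (n.factorial : ℚ) *
        ∑ i ∈ Finset.Icc 1 (n - k + 1), ((n - i).choose (k - 1) : ℚ) *
          ∑ m ∈ Finset.Icc 1 (min k p),
            (stirling2 p m : ℚ) / ((k - m).factorial : ℚ) *
              ((stirling1 (i + m - 1) p : ℚ) / ((i + m - 1).factorial : ℚ)) := by
  have ha : (∑ j ∈ Finset.Icc k n, (stirling1 n j : ℚ) * (stirling2 j k : ℚ) * (j.choose p : ℚ))
      = ∑ j ∈ Finset.range (n+1), (stirling1 n j : ℚ) * (stirling2 j k : ℚ) * (j.choose p : ℚ) := by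
    apply Finset.sum_subset
    · intro x hx
      rw [Finset.mem_Icc] at hx
      rw [Finset.mem_range]
      omega
    · intro x hx hnx
      rw [Finset.mem_range] at hx
      rw [Finset.mem_Icc] at hnx
      have hxk : x < k := by omega
      rw [stirling2_eq_zero hxk]
      simp
  rw [ha]
  have hb : ∀ j ∈ Finset.range (n+1),
      (stirling1 n j : ℚ) * (stirling2 j k : ℚ) * (j.choose p : ℚ)
      = ∑ m ∈ Finset.Icc 1 (min k p), (stirling2 p m : ℚ) *
          ((stirling1 n j : ℚ) * ((j.choose p : ℚ) * (Bgrow (j-p) m k : ℚ))) := by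
    intro j _
    have h := lemL7 j k p hp
    have hq : (stirling2 j k : ℚ) * (j.choose p : ℚ)
        = ∑ m ∈ Finset.Icc 1 (min k p),
            (stirling2 p m : ℚ) * ((j.choose p : ℚ) * (Bgrow (j-p) m k : ℚ)) := by
      have := congrArg (Nat.cast : ℕ → ℚ) h
      push_cast at this
      exact this
    calc (stirling1 n j : ℚ) * (stirling2 j k : ℚ) * (j.choose p : ℚ)
        = (stirling1 n j : ℚ) * ((stirling2 j k : ℚ) * (j.choose p : ℚ)) := by ring
      _ = (stirling1 n j : ℚ) * ∑ m ∈ Finset.Icc 1 (min k p),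
            (stirling2 p m : ℚ) * ((j.choose p : ℚ) * (Bgrow (j-p) m k : ℚ)) := by rw [hq]
      _ = _ := by
          rw [Finset.mul_sum]
          apply Finset.sum_congr rfl
          intro m _
          ring
  rw [Finset.sum_congr rfl hb, Finset.sum_comm]
  rw [Finset.mul_sum]
  have hc : ∀ i ∈ Finset.Icc 1 (n-k+1),
      (n.factorial : ℚ) * (((n - i).choose (k - 1) : ℚ) *
        ∑ m ∈ Finset.Icc 1 (min k p),
          (stirling2 p m : ℚ) / ((k - m).factorial : ℚ) *
            ((stirling1 (i + m - 1) p : ℚ) / ((i + m - 1).factorial : ℚ)))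
      = ∑ m ∈ Finset.Icc 1 (min k p),
          (stirling2 p m : ℚ) / ((k - m).factorial : ℚ) *
            (((n - i).choose (k - 1) : ℚ) * ((n.factorial : ℚ) / ((i+m-1).factorial : ℚ)) *
              (stirling1 (i+m-1) p : ℚ)) := by
    intro i _
    rw [Finset.mul_sum, Finset.mul_sum]
    apply Finset.sum_congr rfl
    intro m _
    field_simp
  rw [Finset.sum_congr rfl hc]
  conv_rhs => rw [Finset.sum_comm]
  apply Finset.sum_congr rfl
  intro m hm
  rw [Finset.mem_Icc] at hm
  have hm1 : 1 ≤ m := hm.1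
  have hmk : m ≤ k := le_trans hm.2 (min_le_left k p)
  have hmp : m ≤ p := le_trans hm.2 (min_le_right k p)
  have hLB : ∑ j ∈ Finset.range (n+1), (stirling2 p m : ℚ) *
      ((stirling1 n j : ℚ) * ((j.choose p : ℚ) * (Bgrow (j-p) m k : ℚ)))
      = (stirling2 p m : ℚ) * LBq n k m p := by
    rw [LBq, Finset.mul_sum]
  rw [hLB]
  have hRB := lemL8 n k m p hm1 hmk hkn hmp
  have hB := lemB k hk n m p hm1 hmk
  have hfac : ((k-m).factorial : ℚ) ≠ 0 := by
    exact_mod_cast Nat.factorial_ne_zero (k-m)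
  calc (stirling2 p m : ℚ) * LBq n k m p
      = (stirling2 p m : ℚ) / ((k-m).factorial : ℚ) * (((k-m).factorial : ℚ) * LBq n k m p) := by
        field_simp
    _ = (stirling2 p m : ℚ) / ((k-m).factorial : ℚ) * RBq n k m p := by rw [hB]
    _ = _ := by
        rw [hRB, Finset.mul_sum]
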